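/- arXiv:2410.09446 — 2 statements merged into one kernel-verified Lean document; each statement's English description precedes it below -/
import Mathlib

section
/- Let T be a bounded, linear, positive operator on L²(G, ℂ^{s×r}) that is adjointable with respect to the matrix-valued inner product, and let {E_k}_{k∈ℕ} be a matrix-valued orthonormal basis for L²(G, ℂ^{s×r}). Then for every n ∈ ℕ, the sequence {(I + T + T² + ⋯ + Tⁿ) E_k}_{k∈ℕ} = {(∑_{j=0}^{n} T^j) E_k}_{k∈ℕ} is a matrix-valued Riesz basis for L²(G, ℂ^{s×r}), where I denotes the identity operator and T^j the j-fold composition of T. -/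
open MeasureTheory Filter
open scoped ENNReal ComplexOrder

noncomputable section

/-- The space `L²(G, ℂ^{s×r})` of square-integrable `ℂ^{s×r}`-valued functions on `G`,
realized as an `Lp`-space with values in `EuclideanSpace ℂ (Fin s × Fin r)`
(so that the norm is the Frobenius norm). -/
abbrev MatL2 {G : Type*} [MeasurableSpace G] (μ : Measure G) (s r : ℕ) : Type _ :=
  Lp (α := G) (EuclideanSpace ℂ (Fin s × Fin r)) 2 μ

/-- The matrix-valued inner product `⟨f, g⟩ = ∫_G f(x) g(x)* dμ(x)`, an `s × s` matrix. -/
def matInner {G : Type*} [MeasurableSpace G] {μ : Measure G} {s r : ℕ}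
    (f g : MatL2 μ s r) : Matrix (Fin s) (Fin s) ℂ :=
  Matrix.of fun i j => ∫ x, ∑ n : Fin r, f x (i, n) * (starRingEnd ℂ) (g x (j, n)) ∂μ

/-- Left multiplication by the matrix `A : ℂ^{s×s}` as a continuous linear map on
`ℂ^{s×r} ≅ EuclideanSpace ℂ (Fin s × Fin r)`; it is given by the matrix `A ⊗ I`. -/
def matMulCLM (s r : ℕ) (A : Matrix (Fin s) (Fin s) ℂ) :
    EuclideanSpace ℂ (Fin s × Fin r) →L[ℂ] EuclideanSpace ℂ (Fin s × Fin r) :=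
  LinearMap.toContinuousLinearMap
    (Matrix.toEuclideanLin (Matrix.of fun p q : Fin s × Fin r =>
      if p.2 = q.2 then A p.1 q.1 else 0))

/-- The action of a matrix `A : ℂ^{s×s}` on `h ∈ L²(G, ℂ^{s×r})` by pointwise left
multiplication, `(A h)(x) = A · h(x)`. -/
def matSMul {G : Type*} [MeasurableSpace G] {μ : Measure G} {s r : ℕ}
    (A : Matrix (Fin s) (Fin s) ℂ) (f : MatL2 μ s r) : MatL2 μ s r :=
  (matMulCLM s r A).compLp f

/-- A bounded linear operator `U` on `L²(G, ℂ^{s×r})` is adjointable with respect to the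
matrix-valued inner product if `⟨U f, g⟩ = ⟨f, U* g⟩` (as `s × s` matrices) for all `f, g`,
where `U*` is the Hilbert adjoint of `U`. -/
def MatAdjointable {G : Type*} [MeasurableSpace G] {μ : Measure G} {s r : ℕ}
    (U : MatL2 μ s r →L[ℂ] MatL2 μ s r) : Prop :=
  ∀ f g : MatL2 μ s r,
    matInner (U f) g = matInner f (ContinuousLinearMap.adjoint U g)

/-- A matrix-valued orthonormal basis of `L²(G, ℂ^{s×r})`: `⟨E k, E j⟩ = δ_{kj} I` and
every `f` has the expansion `f = ∑_k ⟨f, E k⟩ E k`, the series converging in norm. -/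
def IsMatONB {G : Type*} [MeasurableSpace G] {μ : Measure G} {s r : ℕ}
    (E : ℕ → MatL2 μ s r) : Prop :=
  (∀ k j : ℕ, matInner (E k) (E j) =
      if k = j then (1 : Matrix (Fin s) (Fin s) ℂ) else (0 : Matrix (Fin s) (Fin s) ℂ)) ∧
  (∀ f : MatL2 μ s r,
    Tendsto (fun N : ℕ => ∑ k ∈ Finset.range N, matSMul (matInner f (E k)) (E k))
      atTop (nhds f))

/-- A matrix-valued Riesz basis of `L²(G, ℂ^{s×r})`: the image of a matrix-valued
orthonormal basis under a bounded, linear, bijective operator that is adjointable with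
respect to the matrix-valued inner product. -/
def IsMatRieszBasis {G : Type*} [MeasurableSpace G] {μ : Measure G} {s r : ℕ}
    (F : ℕ → MatL2 μ s r) : Prop :=
  ∃ (E : ℕ → MatL2 μ s r) (V : MatL2 μ s r →L[ℂ] MatL2 μ s r),
    IsMatONB E ∧ Function.Bijective V ∧ MatAdjointable V ∧ ∀ k : ℕ, F k = V (E k)

/-- The Frobenius norm of an `s × s` complex matrix. -/
def frobNorm {s : ℕ} (A : Matrix (Fin s) (Fin s) ℂ) : ℝ :=
  Real.sqrt (∑ i : Fin s, ∑ j : Fin s, ‖A i j‖ ^ 2)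

end


noncomputable section Helpers

open scoped InnerProductSpace

variable {G : Type*} [MeasurableSpace G] {μ : Measure G} {s r : ℕ}

/-- The coordinate slice CLM. -/
def coordQ (s r : ℕ) (i : Fin s) :
    EuclideanSpace ℂ (Fin s × Fin r) →L[ℂ] EuclideanSpace ℂ (Fin r) :=
  LinearMap.toContinuousLinearMap
    { toFun := fun v => (WithLp.toLp 2 (fun n => v (i, n)) : EuclideanSpace ℂ (Fin r))
      map_add' := fun _ _ => rfl
      map_smul' := fun _ _ => rfl }

lemma matInner_eq (f g : MatL2 μ s r) (i j : Fin s) :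
    matInner f g i j
      = ⟪((coordQ s r j).compLp g : Lp (EuclideanSpace ℂ (Fin r)) 2 μ),
          (coordQ s r i).compLp f⟫_ℂ := by
  rw [MeasureTheory.L2.inner_def]
  show (∫ x, ∑ n : Fin r, f x (i, n) * (starRingEnd ℂ) (g x (j, n)) ∂μ) = _
  refine integral_congr_ae ?_
  filter_upwards [ContinuousLinearMap.coeFn_compLp (coordQ s r j) g,
    ContinuousLinearMap.coeFn_compLp (coordQ s r i) f] with x h1 h2
  rw [h1, h2]
  simp [coordQ, LinearMap.coe_mk, AddHom.coe_mk, PiLp.inner_apply, RCLike.inner_apply, mul_comm]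
  rfl

lemma matInner_sum_left {ι : Type*} (F : Finset ι) (h : ι → MatL2 μ s r)
    (g : MatL2 μ s r) :
    matInner (∑ a ∈ F, h a) g = ∑ a ∈ F, matInner (h a) g := by
  ext i j
  rw [Matrix.sum_apply]
  simp only [matInner_eq]
  rw [show ((coordQ s r i).compLp (∑ a ∈ F, h a) : Lp (EuclideanSpace ℂ (Fin r)) 2 μ)
      = ∑ a ∈ F, (coordQ s r i).compLp (h a) by
    have hrfl : ∀ h : MatL2 μ s r,
        (coordQ s r i).compLp h = (coordQ s r i).compLpL 2 μ h := fun _ => rfl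
    simp_rw [hrfl]
    exact map_sum _ _ _]
  exact inner_sum _ _ _

lemma matInner_sum_right {ι : Type*} (F : Finset ι) (h : ι → MatL2 μ s r)
    (g : MatL2 μ s r) :
    matInner g (∑ a ∈ F, h a) = ∑ a ∈ F, matInner g (h a) := by
  ext i j
  rw [Matrix.sum_apply]
  simp only [matInner_eq]
  rw [show ((coordQ s r j).compLp (∑ a ∈ F, h a) : Lp (EuclideanSpace ℂ (Fin r)) 2 μ)
      = ∑ a ∈ F, (coordQ s r j).compLp (h a) by
    have hrfl : ∀ h : MatL2 μ s r,
        (coordQ s r j).compLp h = (coordQ s r j).compLpL 2 μ h := fun _ => rfl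
    simp_rw [hrfl]
    exact map_sum _ _ _]
  exact sum_inner _ _ _

lemma pow_isPositive (T : MatL2 μ s r →L[ℂ] MatL2 μ s r) (hpos : T.IsPositive) :
    ∀ m : ℕ, (T ^ m).IsPositive := by
  have hself : ContinuousLinearMap.adjoint T = T := by
    have := hpos.isSelfAdjoint
    rwa [IsSelfAdjoint, ContinuousLinearMap.star_eq_adjoint] at this
  intro m
  induction m using Nat.strong_induction_on with
  | _ m ih =>
    match m with
    | 0 => simpa [pow_zero] using ContinuousLinearMap.isPositive_one
    | 1 => simpa [pow_one] using hpos
    | (m + 2) =>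
      have h := (ih m (by omega)).adjoint_conj T
      rw [hself] at h
      have heq : T ∘L (T ^ m) ∘L T = T ^ (m + 2) := by
        rw [← ContinuousLinearMap.mul_def, ← ContinuousLinearMap.mul_def,
          ← pow_succ, ← pow_succ']
      rwa [heq] at h

lemma matInner_pow_comm (T : MatL2 μ s r →L[ℂ] MatL2 μ s r)
    (hself : ContinuousLinearMap.adjoint T = T) (hadj : MatAdjointable T)
    (m : ℕ) (f g : MatL2 μ s r) :
    matInner ((T ^ m) f) g = matInner f ((T ^ m) g) := by
  induction m generalizing f with
  | zero => simp
  | succ m ih =>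
    have h1 : (T ^ (m + 1)) f = (T ^ m) (T f) := by
      rw [pow_succ]; rfl
    have h2 : (T ^ (m + 1)) g = T ((T ^ m) g) := by
      rw [pow_succ']; rfl
    rw [h1, ih (T f), h2]
    have := hadj f ((T ^ m) g)
    rwa [hself] at this

end Helpers

open scoped InnerProductSpace in
set_option maxHeartbeats 1000000 in

theorem stmt_7 {G : Type*} [MeasurableSpace G] [TopologicalSpace G] [BorelSpace G]
    [AddCommGroup G] [IsTopologicalAddGroup G] [LocallyCompactSpace G]
    [SigmaCompactSpace G] [TopologicalSpace.MetrizableSpace G]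
    (μ : MeasureTheory.Measure G) [μ.IsAddHaarMeasure] (s r : ℕ) (hs : 0 < s) (hr : 0 < r)
    (T : MatL2 μ s r →L[ℂ] MatL2 μ s r)
    (hpos : T.IsPositive) (hadj : MatAdjointable T)
    (E : ℕ → MatL2 μ s r) (hE : IsMatONB E) :
    ∀ n : ℕ,
      IsMatRieszBasis (fun k => (∑ j ∈ Finset.range (n + 1), T ^ j) (E k)) := by

  classical
  intro n
  set V : MatL2 μ s r →L[ℂ] MatL2 μ s r := ∑ j ∈ Finset.range (n + 1), T ^ j with hV
  have hself : ContinuousLinearMap.adjoint T = T := by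
    have := hpos.isSelfAdjoint
    rwa [IsSelfAdjoint, ContinuousLinearMap.star_eq_adjoint] at this
  -- V is self-adjoint
  have hVself : ContinuousLinearMap.adjoint V = V := by
    rw [hV, map_sum]
    refine Finset.sum_congr rfl fun j _ => ?_
    have := ((pow_isPositive T hpos j).isSelfAdjoint)
    rwa [IsSelfAdjoint, ContinuousLinearMap.star_eq_adjoint] at this
  -- coercivity
  have hW : (∑ j ∈ Finset.range n, T ^ (j + 1)).IsPositive := by
    refine Finset.sum_induction _ ContinuousLinearMap.IsPositive
      (fun a b => ContinuousLinearMap.IsPositive.add)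
      ContinuousLinearMap.isPositive_zero (fun j _ => pow_isPositive T hpos (j + 1))
  have hVsplit : V = (∑ j ∈ Finset.range n, T ^ (j + 1)) + 1 := by
    rw [hV, Finset.sum_range_succ']; simp
  have hcoer : ∀ f : MatL2 μ s r, ‖f‖ ^ 2 ≤ RCLike.re (⟪V f, f⟫_ℂ) := by
    intro f
    have : V f = (∑ j ∈ Finset.range n, T ^ (j + 1)) f + f := by
      rw [hVsplit]; rfl
    rw [this, inner_add_left, map_add]
    have h1 : (0 : ℝ) ≤ RCLike.re (⟪(∑ j ∈ Finset.range n, T ^ (j + 1)) f, f⟫_ℂ) := hW.2 f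
    have h2 : RCLike.re (⟪f, f⟫_ℂ) = ‖f‖ ^ 2 := by
      rw [@inner_self_eq_norm_sq ℂ]
    linarith
  have hbound : ∀ f : MatL2 μ s r, ‖f‖ ≤ ‖V f‖ := by
    intro f
    rcases eq_or_ne f 0 with rfl | hf
    · simp
    · have h0 : 0 < ‖f‖ := norm_pos_iff.mpr hf
      have h1 : ‖f‖ ^ 2 ≤ RCLike.re (⟪V f, f⟫_ℂ) := hcoer f
      have h2 : RCLike.re (⟪V f, f⟫_ℂ) ≤ ‖(⟪V f, f⟫_ℂ)‖ := RCLike.re_le_norm _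
      have h3 : ‖(⟪V f, f⟫_ℂ)‖ ≤ ‖V f‖ * ‖f‖ := norm_inner_le_norm _ _
      nlinarith
  have hanti : AntilipschitzWith 1 V :=
    V.antilipschitz_of_bound (by simpa using hbound)
  -- bijectivity
  have hinj : Function.Injective V := hanti.injective
  have hsurj : Function.Surjective V := by
    set R : Submodule ℂ (MatL2 μ s r) := LinearMap.range (V : MatL2 μ s r →ₗ[ℂ] MatL2 μ s r) with hR
    have hclosed : IsClosed (R : Set (MatL2 μ s r)) := by
      have h1 := hanti.isClosed_range V.uniformContinuous
      have h2 : (R : Set (MatL2 μ s r)) = Set.range V := by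
        rw [hR]; ext y; simp [LinearMap.mem_range, Set.mem_range]
      rw [h2]; exact h1
    haveI : CompleteSpace R := hclosed.completeSpace_coe
    have horth : Rᗮ = ⊥ := by
      rw [Submodule.eq_bot_iff]
      intro x hx
      have hVx : ⟪V x, x⟫_ℂ = 0 :=
        (Submodule.mem_orthogonal R x).mp hx (V x) (LinearMap.mem_range_self _ x)
      have := hcoer x
      rw [hVx] at this
      simp only [map_zero] at this
      have : ‖x‖ = 0 := by nlinarith [norm_nonneg x]
      simpa using norm_eq_zero.mp this
    have : R = ⊤ := Submodule.orthogonal_eq_bot_iff.mp horth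
    intro y
    have : y ∈ R := this ▸ Submodule.mem_top
    exact this
  -- adjointability
  have hVadj : MatAdjointable V := by
    intro f g
    rw [hVself]
    have h1 : V f = ∑ j ∈ Finset.range (n + 1), (T ^ j) f := by
      rw [hV]; exact ContinuousLinearMap.sum_apply _ _ _
    have h2 : V g = ∑ j ∈ Finset.range (n + 1), (T ^ j) g := by
      rw [hV]; exact ContinuousLinearMap.sum_apply _ _ _
    rw [h1, h2, matInner_sum_left, matInner_sum_right]
    exact Finset.sum_congr rfl fun j _ => matInner_pow_comm T hself hadj j f g
  exact ⟨E, V, hE, ⟨hinj, hsurj⟩, hVadj, fun k => rfl⟩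
end

section
/- Let {E_k}_{k∈ℕ} be a matrix-valued orthonormal basis for L²(G, ℂ^{s×r}) and let U be a bounded, linear, bijective operator on L²(G, ℂ^{s×r}) that is adjointable with respect to the matrix-valued inner product. Set f_k = U E_k and g_k = (U⁻¹)* E_k = (U*)⁻¹ E_k for k ∈ ℕ. Then: (i) (U⁻¹)* is a bounded, linear, bijective operator on L²(G, ℂ^{s×r}) that is adjointable with respect to the matrix-valued inner product (hence {g_k}_{k∈ℕ} is a matrix-valued Riesz basis); and (ii) every f ∈ L²(G, ℂ^{s×r}) satisfies f = ∑_{k∈ℕ} ⟨f, g_k⟩ f_k, the series converging in the Frobenius norm. -/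
open MeasureTheory Filter
open scoped ENNReal ComplexOrder

noncomputable section

section aux

variable {G : Type*} [MeasurableSpace G] {μ : Measure G} {s r : ℕ}

lemma coord_norm_le (v : EuclideanSpace ℂ (Fin s × Fin r)) (p : Fin s × Fin r) :
    ‖v p‖ ≤ ‖v‖ := by
  rw [EuclideanSpace.norm_eq]
  have h1 : ‖v p‖ = Real.sqrt (‖v p‖ ^ 2) := by
    rw [Real.sqrt_sq (norm_nonneg _)]
  rw [h1]
  apply Real.sqrt_le_sqrt
  exact Finset.single_le_sum (f := fun q => ‖v q‖ ^ 2)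
    (fun q _ => by positivity) (Finset.mem_univ p)

lemma coord_memL2 (f : MatL2 μ s r) (p : Fin s × Fin r) :
    MemLp (fun x => f x p) 2 μ := by
  refine MemLp.of_le (Lp.memLp f) ?_ (Eventually.of_forall fun x => coord_norm_le _ _)
  have : (fun x => f x p) = fun x => EuclideanSpace.proj (𝕜 := ℂ) p (f x) := by
    ext x; simp
  rw [this]
  exact (EuclideanSpace.proj (𝕜 := ℂ) p).continuous.comp_aestronglyMeasurable
    (Lp.aestronglyMeasurable f)

lemma integrable_term (f g : MatL2 μ s r) (p q : Fin s × Fin r) :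
    Integrable (fun x => f x p * (starRingEnd ℂ) (g x q)) μ := by
  have hg : MemLp (fun x => (starRingEnd ℂ) (g x q)) 2 μ := by
    refine MemLp.of_le (Lp.memLp g) ?_
      (Eventually.of_forall fun x => by simpa using coord_norm_le (g x) q)
    exact (Complex.isometry_conj.continuous).comp_aestronglyMeasurable
      ((coord_memL2 g q).aestronglyMeasurable)
  have := (hg.smul (coord_memL2 f p) (p := 2) (q := 2) (r := 1))
  rw [← memLp_one_iff_integrable]
  simpa [Pi.smul_def, smul_eq_mul, mul_comm, Pi.mul_def] using this

lemma matInner_conjT (f g : MatL2 μ s r) :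
    matInner g f = Matrix.conjTranspose (matInner f g) := by
  ext i j
  simp only [matInner, Matrix.conjTranspose_apply, Matrix.of_apply]
  rw [RCLike.star_def, ← integral_conj]
  congr 1
  ext x
  rw [map_sum]
  congr 1
  ext n
  simp [mul_comm]

lemma matMulCLM_apply (A : Matrix (Fin s) (Fin s) ℂ)
    (v : EuclideanSpace ℂ (Fin s × Fin r)) (i : Fin s) (n : Fin r) :
    matMulCLM s r A v (i, n) = ∑ m : Fin s, A i m * v (m, n) := by
  simp only [matMulCLM, LinearMap.coe_toContinuousLinearMap', Matrix.toEuclideanLin_apply]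
  show (Matrix.mulVec _ _) (i, n) = _
  simp only [Matrix.mulVec, dotProduct, Fintype.sum_prod_type, Matrix.of_apply]
  congr 1
  ext m
  rw [Finset.sum_eq_single n]
  · simp
  · intro b _ hb; simp [hb.symm]
  · simp

lemma matSMul_coeFn (A : Matrix (Fin s) (Fin s) ℂ) (f : MatL2 μ s r) :
    ∀ᵐ x ∂μ, (matSMul A f : MatL2 μ s r) x = matMulCLM s r A (f x) :=
  ContinuousLinearMap.coeFn_compLp _ _

lemma matInner_matSMul (A : Matrix (Fin s) (Fin s) ℂ) (f g : MatL2 μ s r) :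
    matInner (matSMul A f) g = A * matInner f g := by
  ext i j
  simp only [matInner, Matrix.of_apply, Matrix.mul_apply]
  have h1 : ∫ x, ∑ n : Fin r, (matSMul A f : MatL2 μ s r) x (i, n) *
      (starRingEnd ℂ) (g x (j, n)) ∂μ =
      ∫ x, ∑ m : Fin s, A i m * ∑ n : Fin r, f x (m, n) *
        (starRingEnd ℂ) (g x (j, n)) ∂μ := by
    refine integral_congr_ae ((matSMul_coeFn A f).mono fun x hx => ?_)
    dsimp only
    rw [hx]
    simp only [matMulCLM_apply, Finset.sum_mul, Finset.mul_sum]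
    rw [Finset.sum_comm]
    congr 1; ext n; congr 1; ext m; ring
  rw [h1, integral_finset_sum _ (fun m _ => Integrable.const_mul
    (integrable_finset_sum _ fun n _ => integrable_term f g (m, n) (j, n)) (A i m))]
  exact Finset.sum_congr rfl fun m _ => integral_const_mul _ _

lemma sum_diag_matInner (f g : MatL2 μ s r) :
    ∑ i : Fin s, matInner f g i i = (inner ℂ g f : ℂ) := by
  have hinner : (inner ℂ g f : ℂ) = ∫ x, inner ℂ (g x) (f x) ∂μ := L2.inner_def g f
  rw [hinner]
  have : ∀ x : G, (inner ℂ (g x) (f x) : ℂ) =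
      ∑ i : Fin s, ∑ n : Fin r, f x (i, n) * (starRingEnd ℂ) (g x (i, n)) := by
    intro x
    rw [PiLp.inner_apply]
    rw [Fintype.sum_prod_type]
    congr 1
  simp_rw [this]
  rw [integral_finset_sum _ (fun i _ =>
    integrable_finset_sum _ fun n _ => integrable_term f g (i, n) (i, n))]
  rfl

lemma ext_matInner {a b : MatL2 μ s r}
    (h : ∀ g : MatL2 μ s r, matInner a g = matInner b g) : a = b := by
  refine ext_inner_left ℂ fun g => ?_
  rw [← sum_diag_matInner a g, ← sum_diag_matInner b g, h g]

lemma adjointable_matSMul_comm {U : MatL2 μ s r →L[ℂ] MatL2 μ s r}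
    (hU : ∀ f g : MatL2 μ s r,
      matInner (U f) g = matInner f (ContinuousLinearMap.adjoint U g))
    (A : Matrix (Fin s) (Fin s) ℂ) (f : MatL2 μ s r) :
    U (matSMul A f) = matSMul A (U f) := by
  refine ext_matInner fun g => ?_
  rw [hU, matInner_matSMul, matInner_matSMul, ← hU]

end aux

end

theorem stmt_18 {G : Type*} [MeasurableSpace G] [TopologicalSpace G] [BorelSpace G]
    [AddCommGroup G] [IsTopologicalAddGroup G] [LocallyCompactSpace G]
    [SigmaCompactSpace G] [TopologicalSpace.MetrizableSpace G]
    (μ : MeasureTheory.Measure G) [μ.IsAddHaarMeasure] (s r : ℕ) (hs : 0 < s) (hr : 0 < r)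
    (E : ℕ → MatL2 μ s r) (hE : IsMatONB E)
    (U V : MatL2 μ s r →L[ℂ] MatL2 μ s r)
    (hUbij : Function.Bijective U) (hUadj : MatAdjointable U)
    (hVU : ∀ x, V (U x) = x) (hUV : ∀ x, U (V x) = x) :
    (Function.Bijective (ContinuousLinearMap.adjoint V) ∧
        MatAdjointable (ContinuousLinearMap.adjoint V) ∧
        IsMatRieszBasis (fun k => ContinuousLinearMap.adjoint V (E k))) ∧
      ∀ f : MatL2 μ s r,
        Filter.Tendsto
          (fun N : ℕ => ∑ k ∈ Finset.range N,
            matSMul (matInner f (ContinuousLinearMap.adjoint V (E k))) (U (E k)))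
          Filter.atTop (nhds f) := by
  have hcompVU : V.comp U = ContinuousLinearMap.id ℂ (MatL2 μ s r) := by
    exact ContinuousLinearMap.ext fun x => hVU x
  have hcompUV : U.comp V = ContinuousLinearMap.id ℂ (MatL2 μ s r) := by
    exact ContinuousLinearMap.ext fun x => hUV x
  have h1 : ∀ x, ContinuousLinearMap.adjoint U (ContinuousLinearMap.adjoint V x) = x := by
    intro x
    have h : (ContinuousLinearMap.adjoint U).comp (ContinuousLinearMap.adjoint V) =
        ContinuousLinearMap.id ℂ (MatL2 μ s r) := by
      rw [← ContinuousLinearMap.adjoint_comp, hcompVU, ContinuousLinearMap.adjoint_id]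
    calc ContinuousLinearMap.adjoint U (ContinuousLinearMap.adjoint V x)
        = ((ContinuousLinearMap.adjoint U).comp (ContinuousLinearMap.adjoint V)) x := rfl
      _ = x := by rw [h]; rfl
  have h2 : ∀ x, ContinuousLinearMap.adjoint V (ContinuousLinearMap.adjoint U x) = x := by
    intro x
    have h : (ContinuousLinearMap.adjoint V).comp (ContinuousLinearMap.adjoint U) =
        ContinuousLinearMap.id ℂ (MatL2 μ s r) := by
      rw [← ContinuousLinearMap.adjoint_comp, hcompUV, ContinuousLinearMap.adjoint_id]
    calc ContinuousLinearMap.adjoint V (ContinuousLinearMap.adjoint U x)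
        = ((ContinuousLinearMap.adjoint V).comp (ContinuousLinearMap.adjoint U)) x := rfl
      _ = x := by rw [h]; rfl
  have hVadj : ∀ f g : MatL2 μ s r,
      matInner (V f) g = matInner f (ContinuousLinearMap.adjoint V g) := by
    intro f g
    calc matInner (V f) g
        = matInner (V f)
            (ContinuousLinearMap.adjoint U (ContinuousLinearMap.adjoint V g)) := by
          rw [h1]
      _ = matInner (U (V f)) (ContinuousLinearMap.adjoint V g) :=
          (hUadj (V f) (ContinuousLinearMap.adjoint V g)).symm
      _ = matInner f (ContinuousLinearMap.adjoint V g) := by rw [hUV]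
  have hAVadj : MatAdjointable (ContinuousLinearMap.adjoint V) := by
    intro f g
    rw [ContinuousLinearMap.adjoint_adjoint]
    calc matInner (ContinuousLinearMap.adjoint V f) g
        = Matrix.conjTranspose (matInner g (ContinuousLinearMap.adjoint V f)) :=
          matInner_conjT g (ContinuousLinearMap.adjoint V f)
      _ = Matrix.conjTranspose (matInner (V g) f) := by rw [← hVadj g f]
      _ = matInner f (V g) := (matInner_conjT (V g) f).symm
  have hbij : Function.Bijective (ContinuousLinearMap.adjoint V) :=
    Function.bijective_iff_has_inverse.mpr
      ⟨ContinuousLinearMap.adjoint U, h1, h2⟩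
  refine ⟨⟨hbij, hAVadj, ⟨E, ContinuousLinearMap.adjoint V, hE, hbij, hAVadj,
    fun k => rfl⟩⟩, ?_⟩
  intro f
  have key : ∀ k, matSMul (matInner f (ContinuousLinearMap.adjoint V (E k))) (U (E k))
      = U (matSMul (matInner (V f) (E k)) (E k)) := by
    intro k
    rw [← hVadj f (E k), adjointable_matSMul_comm hUadj]
  have htd := (U.continuous.tendsto (V f)).comp (hE.2 (V f))
  simp only [Function.comp_def, map_sum, hUV f] at htd
  simpa only [key] using htd
end
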